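/- Consider a feasible instance of the BMILP, i.e., F ≠ ∅, and let v* = inf{c·x + e·z : (x,z) ∈ F}, which is finite by the boundedness assumptions. Then there exist x* ∈ ℤ^n and an integer vector β ∈ ℤ^m such that the polytope T = {z ∈ ℝ^d : z ≥ 0, D·z ≤ p − C·x*, β ≤ B·z + u ≤ β + 1} is nonempty and compact, and v* = c·x* + min{e·z : z ∈ T}. -/

import Mathlib

open Matrix

/-- A real vector has all integer entries. -/
def IsIntVec {n : ℕ} (x : Fin n → ℝ) : Prop := ∀ i, ∃ k : ℤ, x i = (k : ℝ)

/-- The upper-level polyhedron P. -/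
def upperP {n d h : ℕ} (C : Matrix (Fin h) (Fin n) ℤ) (D : Matrix (Fin h) (Fin d) ℤ)
    (p : Fin h → ℤ) : Set ((Fin n → ℝ) × (Fin d → ℝ)) :=
  {xz | (C.map ((↑) : ℤ → ℝ)).mulVec xz.1 + (D.map ((↑) : ℤ → ℝ)).mulVec xz.2 ≤
          (fun i => (p i : ℝ)) ∧ 0 ≤ xz.2}

/-- The bilevel feasible set F. -/
def bilevelF {n d m h : ℕ} (A : Matrix (Fin m) (Fin n) ℤ) (B : Matrix (Fin m) (Fin d) ℤ)
    (C : Matrix (Fin h) (Fin n) ℤ) (D : Matrix (Fin h) (Fin d) ℤ)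
    (ψ : Fin n → ℤ) (u : Fin m → ℤ) (p : Fin h → ℤ) :
    Set ((Fin n → ℝ) × (Fin d → ℝ)) :=
  {xz | xz ∈ upperP C D p ∧ IsIntVec xz.1 ∧
    (A.map ((↑) : ℤ → ℝ)).mulVec xz.1 ≤
      (B.map ((↑) : ℤ → ℝ)).mulVec xz.2 + (fun i => (u i : ℝ)) ∧
    ∀ x' : Fin n → ℝ, IsIntVec x' →
      (A.map ((↑) : ℤ → ℝ)).mulVec x' ≤
        (B.map ((↑) : ℤ → ℝ)).mulVec xz.2 + (fun i => (u i : ℝ)) →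
      (fun i => (ψ i : ℝ)) ⬝ᵥ xz.1 ≤ (fun i => (ψ i : ℝ)) ⬝ᵥ x'}

private lemma mulVec_cast_apply {k l : ℕ} (M : Matrix (Fin k) (Fin l) ℤ) (x : Fin l → ℤ) (i : Fin k) :
    (M.map ((↑) : ℤ → ℝ)).mulVec (fun j => (x j : ℝ)) i = ((M.mulVec x i : ℤ) : ℝ) := by
  simp [Matrix.mulVec, dotProduct, Matrix.map_apply]

private lemma abs_dot_le' {k : ℕ} (v z : Fin k → ℝ) : |v ⬝ᵥ z| ≤ (∑ i, |v i|) * ‖z‖ := by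
  rw [dotProduct]
  calc |∑ i, v i * z i| ≤ ∑ i, |v i * z i| := Finset.abs_sum_le_sum_abs _ _
    _ = ∑ i, |v i| * |z i| := by simp [abs_mul]
    _ ≤ ∑ i, |v i| * ‖z‖ := Finset.sum_le_sum fun i _ =>
        mul_le_mul_of_nonneg_left (by simpa [Real.norm_eq_abs] using norm_le_pi_norm z i) (abs_nonneg _)
    _ = (∑ i, |v i|) * ‖z‖ := (Finset.sum_mul _ _ _).symm

private lemma continuous_mulVec_coord {k l : ℕ} (M : Matrix (Fin k) (Fin l) ℝ) (i : Fin k) :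
    Continuous fun z : Fin l → ℝ => M.mulVec z i := by
  simpa [Function.comp_def, Matrix.mulVecLin_apply] using
    ((continuous_apply i).comp M.mulVecLin.continuous_of_finiteDimensional)

/-- For a feasible BMILP instance with infimum value `v*`, there exist an integer point `x*`
and an integer vector `β` such that the polytope
`T = {z : z ≥ 0, D·z ≤ p − C·x*, β ≤ B·z + u ≤ β + 1}` is nonempty and compact, and
`v* = c·x* + min {e·z : z ∈ T}`. -/
theorem bmilp_infimum_slice_representation
    {n d m h : ℕ} (hn : 0 < n) (hd : 0 < d) (hm : 0 < m) (hh : 0 < h)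
    (A : Matrix (Fin m) (Fin n) ℤ) (B : Matrix (Fin m) (Fin d) ℤ)
    (C : Matrix (Fin h) (Fin n) ℤ) (D : Matrix (Fin h) (Fin d) ℤ)
    (c : Fin n → ℤ) (e : Fin d → ℤ) (ψ : Fin n → ℤ) (u : Fin m → ℤ) (p : Fin h → ℤ)
    -- boundedness assumptions
    (hPbdd : Bornology.IsBounded (upperP C D p))
    (hLowbdd : ∀ z : Fin d → ℝ, (∃ x : Fin n → ℝ, (x, z) ∈ upperP C D p) →
      Bornology.IsBounded {x : Fin n → ℝ |
        (A.map ((↑) : ℤ → ℝ)).mulVec x ≤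
          (B.map ((↑) : ℤ → ℝ)).mulVec z + (fun i => (u i : ℝ))})
    -- feasibility
    (hfeas : (bilevelF A B C D ψ u p).Nonempty)
    -- the infimum value
    (vstar : ℝ)
    (hvstar : vstar = sInf ((fun xz : (Fin n → ℝ) × (Fin d → ℝ) =>
      (fun i => (c i : ℝ)) ⬝ᵥ xz.1 + (fun i => (e i : ℝ)) ⬝ᵥ xz.2) '' bilevelF A B C D ψ u p)) :
    ∃ (xstar : Fin n → ℤ) (β : Fin m → ℤ),
      ∀ T : Set (Fin d → ℝ),
        T = {z | 0 ≤ z ∧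
          (D.map ((↑) : ℤ → ℝ)).mulVec z ≤
            (fun i => (p i : ℝ)) - (C.map ((↑) : ℤ → ℝ)).mulVec (fun i => (xstar i : ℝ)) ∧
          (fun i => (β i : ℝ)) ≤ (B.map ((↑) : ℤ → ℝ)).mulVec z + (fun i => (u i : ℝ)) ∧
          (B.map ((↑) : ℤ → ℝ)).mulVec z + (fun i => (u i : ℝ)) ≤ (fun i => (β i : ℝ) + 1)} →
        (T.Nonempty ∧ IsCompact T ∧
          vstar = (fun i => (c i : ℝ)) ⬝ᵥ (fun i => (xstar i : ℝ)) +
            sInf ((fun z => (fun i => (e i : ℝ)) ⬝ᵥ z) '' T)) := by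
  classical
  obtain ⟨R, hR⟩ := hPbdd.exists_norm_le
  have hR0 : 0 ≤ R := by
    obtain ⟨xz0, hxz0⟩ := hfeas
    exact le_trans (norm_nonneg xz0) (hR xz0 hxz0.1)
  -- generic lower bound for integer dot products over norm-bounded vectors
  have hdotlow : ∀ (k : ℕ) (v : Fin k → ℤ) (zv : Fin k → ℝ), ‖zv‖ ≤ R →
      -((∑ i, |(v i : ℝ)|) * R) ≤ (fun i => (v i : ℝ)) ⬝ᵥ zv := by
    intro k v zv hzv
    have h1 := abs_dot_le' (fun i => (v i : ℝ)) zv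
    have h2 : (∑ i, |(v i : ℝ)|) * ‖zv‖ ≤ (∑ i, |(v i : ℝ)|) * R :=
      mul_le_mul_of_nonneg_left hzv (Finset.sum_nonneg fun i _ => abs_nonneg _)
    have h3 := neg_abs_le ((fun i => (v i : ℝ)) ⬝ᵥ zv)
    linarith
  -- the objective image is bounded below
  have hbddF : ∀ xz ∈ bilevelF A B C D ψ u p,
      -((∑ i, |(c i : ℝ)|) * R) + -((∑ i, |(e i : ℝ)|) * R) ≤
        (fun i => (c i : ℝ)) ⬝ᵥ xz.1 + (fun i => (e i : ℝ)) ⬝ᵥ xz.2 := by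
    intro xz hxz
    have hnx : ‖xz.1‖ ≤ R := le_trans (norm_fst_le xz) (hR xz hxz.1)
    have hnz : ‖xz.2‖ ≤ R := le_trans (norm_snd_le xz) (hR xz hxz.1)
    have := hdotlow n c xz.1 hnx
    have := hdotlow d e xz.2 hnz
    linarith
  have hBdd : BddBelow ((fun xz : (Fin n → ℝ) × (Fin d → ℝ) =>
      (fun i => (c i : ℝ)) ⬝ᵥ xz.1 + (fun i => (e i : ℝ)) ⬝ᵥ xz.2) '' bilevelF A B C D ψ u p) :=
    ⟨_, by rintro r ⟨xz, hxz, rfl⟩; exact hbddF xz hxz⟩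
  have hvle : ∀ xz ∈ bilevelF A B C D ψ u p,
      vstar ≤ (fun i => (c i : ℝ)) ⬝ᵥ xz.1 + (fun i => (e i : ℝ)) ⬝ᵥ xz.2 := by
    intro xz hxz
    rw [hvstar]
    exact csInf_le hBdd ⟨xz, hxz, rfl⟩
  -- near-optimal sequence
  have hseq : ∀ q : ℕ, ∃ xz, xz ∈ bilevelF A B C D ψ u p ∧
      (fun i => (c i : ℝ)) ⬝ᵥ xz.1 + (fun i => (e i : ℝ)) ⬝ᵥ xz.2 < vstar + 1 / ((q : ℝ) + 1) := by
    intro q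
    have hpos : (0 : ℝ) < 1 / ((q : ℝ) + 1) := by positivity
    have hlt : sInf ((fun xz : (Fin n → ℝ) × (Fin d → ℝ) =>
        (fun i => (c i : ℝ)) ⬝ᵥ xz.1 + (fun i => (e i : ℝ)) ⬝ᵥ xz.2) '' bilevelF A B C D ψ u p)
        < vstar + 1 / ((q : ℝ) + 1) := by
      rw [← hvstar]; linarith
    obtain ⟨r, ⟨xz, hxz, rfl⟩, hr⟩ := exists_lt_of_csInf_lt (hfeas.image _) hlt
    exact ⟨xz, hxz, hr⟩
  choose w hwF hwlt using hseq
  have hwint : ∀ q : ℕ, ∃ xhq : Fin n → ℤ, (w q).1 = fun i => ((xhq i : ℤ) : ℝ) := by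
    intro q
    obtain ⟨-, hint, -⟩ := hwF q
    exact ⟨fun i => (hint i).choose, funext fun i => (hint i).choose_spec⟩
  choose xh hxh using hwint
  set βf : ℕ → Fin m → ℤ :=
    fun q i => ⌊(B.map ((↑) : ℤ → ℝ)).mulVec (w q).2 i + (u i : ℝ)⌋ with hβf
  -- bounds for pigeonhole
  have hwnorm : ∀ q : ℕ, ‖w q‖ ≤ R := fun q => hR (w q) (hwF q).1
  have hxbound : ∀ q i, ⌈-R⌉ ≤ xh q i ∧ xh q i ≤ ⌊R⌋ := by
    intro q i
    have h1 : ((xh q i : ℤ) : ℝ) = (w q).1 i := (congrFun (hxh q) i).symm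
    have h2 : |(w q).1 i| ≤ R := by
      have := norm_le_pi_norm (w q).1 i
      have := norm_fst_le (w q)
      have := hwnorm q
      simp only [Real.norm_eq_abs] at *
      linarith
    rw [abs_le] at h2
    constructor
    · exact Int.ceil_le.mpr (by rw [h1]; exact h2.1)
    · exact Int.le_floor.mpr (by rw [h1]; exact h2.2)
  have hβbound : ∀ q i, ⌊-((∑ i, ∑ j, |(B i j : ℝ)|) * R + ∑ i, |(u i : ℝ)|)⌋ ≤ βf q i ∧
      βf q i ≤ ⌊(∑ i, ∑ j, |(B i j : ℝ)|) * R + ∑ i, |(u i : ℝ)|⌋ := by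
    intro q i
    have hz : ‖(w q).2‖ ≤ R := le_trans (norm_snd_le (w q)) (hwnorm q)
    have h1 : |(B.map ((↑) : ℤ → ℝ)).mulVec (w q).2 i| ≤ (∑ j, |(B i j : ℝ)|) * R := by
      have := abs_dot_le' (fun j => (B i j : ℝ)) (w q).2
      have h2 : (∑ j, |(B i j : ℝ)|) * ‖(w q).2‖ ≤ (∑ j, |(B i j : ℝ)|) * R :=
        mul_le_mul_of_nonneg_left hz (Finset.sum_nonneg fun j _ => abs_nonneg _)
      calc |(B.map ((↑) : ℤ → ℝ)).mulVec (w q).2 i|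
          = |(fun j => (B i j : ℝ)) ⬝ᵥ (w q).2| := rfl
        _ ≤ (∑ j, |(B i j : ℝ)|) * ‖(w q).2‖ := this
        _ ≤ _ := h2
    have h3 : (∑ j, |(B i j : ℝ)|) ≤ ∑ i', ∑ j, |(B i' j : ℝ)| :=
      Finset.single_le_sum (f := fun i' => ∑ j, |(B i' j : ℝ)|)
        (fun i' _ => Finset.sum_nonneg fun j _ => abs_nonneg _) (Finset.mem_univ i)
    have h4 : |(u i : ℝ)| ≤ ∑ i', |(u i' : ℝ)| :=
      Finset.single_le_sum (f := fun i' => |(u i' : ℝ)|) (fun i' _ => abs_nonneg _)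
        (Finset.mem_univ i)
    have h5 : (∑ j, |(B i j : ℝ)|) * R ≤ (∑ i', ∑ j, |(B i' j : ℝ)|) * R :=
      mul_le_mul_of_nonneg_right h3 hR0
    have habs : |(B.map ((↑) : ℤ → ℝ)).mulVec (w q).2 i + (u i : ℝ)| ≤
        (∑ i', ∑ j, |(B i' j : ℝ)|) * R + ∑ i', |(u i' : ℝ)| := by
      have := abs_add_le ((B.map ((↑) : ℤ → ℝ)).mulVec (w q).2 i) ((u i : ℝ))
      have h6 := abs_nonneg ((u i:ℝ))
      linarith
    rw [abs_le] at habs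
    exact ⟨Int.floor_mono habs.1, Int.floor_mono habs.2⟩
  -- pigeonhole
  set S : Set ((Fin n → ℤ) × (Fin m → ℤ)) :=
    Set.Icc (fun _ => ⌈-R⌉) (fun _ => ⌊R⌋) ×ˢ
    Set.Icc (fun _ => ⌊-((∑ i, ∑ j, |(B i j : ℝ)|) * R + ∑ i, |(u i : ℝ)|)⌋)
      (fun _ => ⌊(∑ i, ∑ j, |(B i j : ℝ)|) * R + ∑ i, |(u i : ℝ)|⌋) with hS
  have hSfin : S.Finite := (Set.finite_Icc _ _).prod (Set.finite_Icc _ _)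
  have hmemS : ∀ q : ℕ, (xh q, βf q) ∈ S := by
    intro q
    refine ⟨Set.mem_Icc.mpr ⟨fun i => (hxbound q i).1, fun i => (hxbound q i).2⟩,
      Set.mem_Icc.mpr ⟨fun i => (hβbound q i).1, fun i => (hβbound q i).2⟩⟩
  haveI : Finite S := hSfin.to_subtype
  obtain ⟨y, hy⟩ := Finite.exists_infinite_fiber (fun q : ℕ => (⟨(xh q, βf q), hmemS q⟩ : S))
  obtain ⟨⟨xstar, βv⟩, hymem⟩ := y
  have hQinf : {q : ℕ | xh q = xstar ∧ βf q = βv}.Infinite := by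
    have h1 := Set.infinite_coe_iff.mp hy
    refine h1.mono ?_
    intro q hq
    simp only [Set.mem_preimage, Set.mem_singleton_iff, Subtype.ext_iff, Prod.ext_iff] at hq
    exact hq
  obtain ⟨q0, hq0⟩ := hQinf.nonempty
  have hws1 : (w q0).1 = fun i => ((xstar i : ℤ) : ℝ) := by rw [hxh q0, hq0.1]
  obtain ⟨⟨hCs, hs0⟩, -, hAs, hopts⟩ := hwF q0
  rw [hws1] at hCs hAs hopts
  have hsfloor : ∀ i, ⌊(B.map ((↑) : ℤ → ℝ)).mulVec (w q0).2 i + (u i : ℝ)⌋ = βv i :=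
    fun i => congrFun hq0.2 i
  have hs_lb : ∀ i, (βv i : ℝ) ≤ (B.map ((↑) : ℤ → ℝ)).mulVec (w q0).2 i + (u i : ℝ) := by
    intro i; rw [← hsfloor i]; exact Int.floor_le _
  have hs_ub : ∀ i, (B.map ((↑) : ℤ → ℝ)).mulVec (w q0).2 i + (u i : ℝ) < (βv i : ℝ) + 1 := by
    intro i; rw [← hsfloor i]; exact Int.lt_floor_add_one _
  refine ⟨xstar, βv, ?_⟩
  intro T hT
  subst hT
  have hTmemQ : ∀ q, xh q = xstar → βf q = βv → (w q).2 ∈ {z : Fin d → ℝ | 0 ≤ z ∧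
      (D.map ((↑) : ℤ → ℝ)).mulVec z ≤
        (fun i => (p i : ℝ)) - (C.map ((↑) : ℤ → ℝ)).mulVec (fun i => (xstar i : ℝ)) ∧
      (fun i => (βv i : ℝ)) ≤ (B.map ((↑) : ℤ → ℝ)).mulVec z + (fun i => (u i : ℝ)) ∧
      (B.map ((↑) : ℤ → ℝ)).mulVec z + (fun i => (u i : ℝ)) ≤ (fun i => (βv i : ℝ) + 1)} := by
    intro q hq1 hq2
    obtain ⟨⟨hC, h0⟩, -, -, -⟩ := hwF q
    have hws : (w q).1 = fun i => ((xstar i : ℤ) : ℝ) := by rw [hxh q, hq1]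
    rw [hws] at hC
    refine ⟨h0, ?_, ?_, ?_⟩
    · refine Pi.le_def.mpr fun i => ?_
      have hci := Pi.le_def.mp hC i
      simp only [Pi.add_apply] at hci
      simp only [Pi.sub_apply]
      linarith
    · refine Pi.le_def.mpr fun i => ?_
      have h1 : (βv i : ℝ) ≤ (B.map ((↑) : ℤ → ℝ)).mulVec (w q).2 i + (u i : ℝ) := by
        rw [← congrFun hq2 i, hβf]
        exact Int.floor_le _
      simpa using h1
    · refine Pi.le_def.mpr fun i => ?_
      have h1 : (B.map ((↑) : ℤ → ℝ)).mulVec (w q).2 i + (u i : ℝ) < (βv i : ℝ) + 1 := by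
        rw [← congrFun hq2 i, hβf]
        exact Int.lt_floor_add_one _
      simpa using h1.le
  set Ts : Set (Fin d → ℝ) := {z : Fin d → ℝ | 0 ≤ z ∧
      (D.map ((↑) : ℤ → ℝ)).mulVec z ≤
        (fun i => (p i : ℝ)) - (C.map ((↑) : ℤ → ℝ)).mulVec (fun i => (xstar i : ℝ)) ∧
      (fun i => (βv i : ℝ)) ≤ (B.map ((↑) : ℤ → ℝ)).mulVec z + (fun i => (u i : ℝ)) ∧
      (B.map ((↑) : ℤ → ℝ)).mulVec z + (fun i => (u i : ℝ)) ≤ (fun i => (βv i : ℝ) + 1)}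
    with hTsdef
  have hTne : Ts.Nonempty := ⟨(w q0).2, hTmemQ q0 hq0.1 hq0.2⟩
  -- every z in Ts lifts into the polytope P
  have hTsub : ∀ z ∈ Ts, ((fun i => (xstar i : ℝ)), z) ∈ upperP C D p := by
    intro z hz
    obtain ⟨h0, hDz, -, -⟩ := hz
    refine ⟨Pi.le_def.mpr fun i => ?_, h0⟩
    have := Pi.le_def.mp hDz i
    simp only [Pi.sub_apply] at this
    simp only [Pi.add_apply]
    linarith
  have hTnorm : ∀ z ∈ Ts, ‖z‖ ≤ R := by
    intro z hz
    exact le_trans (norm_snd_le ((fun i => (xstar i : ℝ)), z)) (hR _ (hTsub z hz))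
  have hclosed : IsClosed Ts := by
    have heq : Ts = (⋂ i, {z : Fin d → ℝ | (0:ℝ) ≤ z i}) ∩
        ((⋂ i, {z : Fin d → ℝ | (D.map ((↑) : ℤ → ℝ)).mulVec z i ≤
            (p i : ℝ) - (C.map ((↑) : ℤ → ℝ)).mulVec (fun i' => (xstar i' : ℝ)) i}) ∩
        ((⋂ i, {z : Fin d → ℝ | (βv i : ℝ) ≤ (B.map ((↑) : ℤ → ℝ)).mulVec z i + (u i : ℝ)}) ∩
         (⋂ i, {z : Fin d → ℝ | (B.map ((↑) : ℤ → ℝ)).mulVec z i + (u i : ℝ) ≤ (βv i : ℝ) + 1}))) := by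
      rw [hTsdef]
      ext z
      simp only [Set.mem_setOf_eq, Set.mem_inter_iff, Set.mem_iInter, Pi.le_def,
        Pi.add_apply, Pi.sub_apply, Pi.zero_apply]
    rw [heq]
    refine IsClosed.inter (isClosed_iInter fun i =>
        isClosed_le continuous_const (continuous_apply i)) (IsClosed.inter
      (isClosed_iInter fun i => isClosed_le (continuous_mulVec_coord _ i) continuous_const)
      (IsClosed.inter
        (isClosed_iInter fun i => isClosed_le continuous_const
          ((continuous_mulVec_coord _ i).add continuous_const))
        (isClosed_iInter fun i => isClosed_le
          ((continuous_mulVec_coord _ i).add continuous_const) continuous_const)))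
  have hcompact : IsCompact Ts :=
    Metric.isCompact_of_isClosed_isBounded hclosed
      (isBounded_iff_forall_norm_le.mpr ⟨R, hTnorm⟩)
  -- the key segment argument: sliding any point of Ts towards the witness stays feasible
  have hkey : ∀ z ∈ Ts, ∀ θ : ℝ, 0 < θ → θ ≤ 1 →
      vstar ≤ (fun i => (c i : ℝ)) ⬝ᵥ (fun i => (xstar i : ℝ)) +
        ((1 - θ) * ((fun i => (e i : ℝ)) ⬝ᵥ z) + θ * ((fun i => (e i : ℝ)) ⬝ᵥ (w q0).2)) := by
    intro z hz θ hθ0 hθ1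
    obtain ⟨h0, hDz, hlb', hub'⟩ := hz
    have hlb : ∀ i, (βv i : ℝ) ≤ (B.map ((↑) : ℤ → ℝ)).mulVec z i + (u i : ℝ) := by
      intro i; have := Pi.le_def.mp hlb' i; simpa using this
    have hub : ∀ i, (B.map ((↑) : ℤ → ℝ)).mulVec z i + (u i : ℝ) ≤ (βv i : ℝ) + 1 := by
      intro i; have := Pi.le_def.mp hub' i; simpa using this
    have hDz' : ∀ i, (D.map ((↑) : ℤ → ℝ)).mulVec z i ≤
        (p i : ℝ) - (C.map ((↑) : ℤ → ℝ)).mulVec (fun i' => (xstar i' : ℝ)) i := by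
      intro i; have := Pi.le_def.mp hDz i; simpa using this
    set zθ : Fin d → ℝ := (1 - θ) • z + θ • (w q0).2 with hzθ
    have hcoord : ∀ {k : ℕ} (M : Matrix (Fin k) (Fin d) ℝ) (i : Fin k),
        M.mulVec zθ i = (1 - θ) * M.mulVec z i + θ * M.mulVec (w q0).2 i := by
      intro k M i
      rw [hzθ]
      simp [Matrix.mulVec_add, Matrix.mulVec_smul, smul_eq_mul]
    have hCs' : ∀ i, (C.map ((↑) : ℤ → ℝ)).mulVec (fun i' => (xstar i' : ℝ)) i +
        (D.map ((↑) : ℤ → ℝ)).mulVec (w q0).2 i ≤ (p i : ℝ) := by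
      intro i; have := Pi.le_def.mp hCs i; simpa using this
    have hAβ : ∀ i, A.mulVec xstar i ≤ βv i := by
      intro i
      have h1 : ((A.mulVec xstar i : ℤ) : ℝ) ≤
          (B.map ((↑) : ℤ → ℝ)).mulVec (w q0).2 i + (u i : ℝ) := by
        have h2 := Pi.le_def.mp hAs i
        simp only [Pi.add_apply] at h2
        rw [mulVec_cast_apply] at h2
        exact h2
      have h3 : ((A.mulVec xstar i : ℤ) : ℝ) < ((βv i : ℤ) : ℝ) + 1 :=
        lt_of_le_of_lt h1 (hs_ub i)
      have h4 : (A.mulVec xstar i : ℤ) < βv i + 1 := by exact_mod_cast h3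
      omega
    have hmem : ((fun i => (xstar i : ℝ)), zθ) ∈ bilevelF A B C D ψ u p := by
      refine ⟨⟨Pi.le_def.mpr fun i => ?_, Pi.le_def.mpr fun i => ?_⟩,
        fun i => ⟨xstar i, rfl⟩, Pi.le_def.mpr fun i => ?_, ?_⟩
      · -- upper-level constraint
        simp only [Pi.add_apply]
        have h1 := hcoord (D.map ((↑) : ℤ → ℝ)) i
        have h2 := hDz' i
        have h3 := hCs' i
        have h4 : (1 - θ) * (D.map ((↑) : ℤ → ℝ)).mulVec z i ≤
            (1 - θ) * ((p i : ℝ) - (C.map ((↑) : ℤ → ℝ)).mulVec (fun i' => (xstar i' : ℝ)) i) :=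
          mul_le_mul_of_nonneg_left h2 (by linarith)
        have h5 : θ * (D.map ((↑) : ℤ → ℝ)).mulVec (w q0).2 i ≤
            θ * ((p i : ℝ) - (C.map ((↑) : ℤ → ℝ)).mulVec (fun i' => (xstar i' : ℝ)) i) :=
          mul_le_mul_of_nonneg_left (by linarith) hθ0.le
        nlinarith [h1, h4, h5]
      · -- nonnegativity
        have hz0 : (0:ℝ) ≤ z i := by simpa using Pi.le_def.mp h0 i
        have hs0' : (0:ℝ) ≤ (w q0).2 i := by simpa using Pi.le_def.mp hs0 i
        have : zθ i = (1 - θ) * z i + θ * (w q0).2 i := by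
          rw [hzθ]; simp [smul_eq_mul]
        simp only [Pi.zero_apply]
        rw [this]
        exact add_nonneg (mul_nonneg (by linarith) hz0) (mul_nonneg hθ0.le hs0')
      · -- follower feasibility of xstar
        simp only [Pi.add_apply]
        rw [mulVec_cast_apply]
        have h1 := hcoord (B.map ((↑) : ℤ → ℝ)) i
        have h2 := hlb i
        have h3 := hs_lb i
        have h5 : ((A.mulVec xstar i : ℤ) : ℝ) ≤ (βv i : ℝ) := by exact_mod_cast hAβ i
        have h6 := mul_le_mul_of_nonneg_left h2 (show (0:ℝ) ≤ 1 - θ by linarith)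
        have h7 := mul_le_mul_of_nonneg_left h3 hθ0.le
        nlinarith [h1, h5, h6, h7]
      · -- follower optimality
        intro x' hx'int hx'le
        obtain ⟨xv, hxv⟩ : ∃ xv : Fin n → ℤ, x' = fun i => ((xv i : ℤ) : ℝ) :=
          ⟨fun i => (hx'int i).choose, funext fun i => (hx'int i).choose_spec⟩
        subst hxv
        have hub2 : ∀ i, (B.map ((↑) : ℤ → ℝ)).mulVec zθ i + (u i : ℝ) < (βv i : ℝ) + 1 := by
          intro i
          have h1 := hcoord (B.map ((↑) : ℤ → ℝ)) i
          have h2 := hub i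
          have h3 := hs_ub i
          have h6 := mul_le_mul_of_nonneg_left h2 (show (0:ℝ) ≤ 1 - θ by linarith)
          have h7 := mul_lt_mul_of_pos_left h3 hθ0
          nlinarith [h1, h6, h7]
        have hxvβ : ∀ i, A.mulVec xv i ≤ βv i := by
          intro i
          have h1 := Pi.le_def.mp hx'le i
          simp only [Pi.add_apply] at h1
          rw [mulVec_cast_apply] at h1
          have h3 : ((A.mulVec xv i : ℤ) : ℝ) < ((βv i : ℤ) : ℝ) + 1 :=
            lt_of_le_of_lt h1 (hub2 i)
          have h4 : (A.mulVec xv i : ℤ) < βv i + 1 := by exact_mod_cast h3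
          omega
        have hfeas' : (A.map ((↑) : ℤ → ℝ)).mulVec (fun i => ((xv i : ℤ) : ℝ)) ≤
            (B.map ((↑) : ℤ → ℝ)).mulVec (w q0).2 + (fun i => (u i : ℝ)) := by
          refine Pi.le_def.mpr fun i => ?_
          simp only [Pi.add_apply]
          rw [mulVec_cast_apply]
          have h5 : ((A.mulVec xv i : ℤ) : ℝ) ≤ (βv i : ℝ) := by exact_mod_cast hxvβ i
          linarith [hs_lb i]
        exact hopts _ hx'int hfeas'
    have hv := hvle _ hmem
    have hdot : (fun i => (e i : ℝ)) ⬝ᵥ zθ =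
        (1 - θ) * ((fun i => (e i : ℝ)) ⬝ᵥ z) + θ * ((fun i => (e i : ℝ)) ⬝ᵥ (w q0).2) := by
      rw [hzθ]
      simp [dotProduct_add, dotProduct_smul, smul_eq_mul]
    simp only at hv
    rw [hdot] at hv
    exact hv
  -- put everything together
  refine ⟨hTne, hcompact, ?_⟩
  have hVne : ((fun z => (fun i => (e i : ℝ)) ⬝ᵥ z) '' Ts).Nonempty := hTne.image _
  have hVbdd : BddBelow ((fun z => (fun i => (e i : ℝ)) ⬝ᵥ z) '' Ts) := by
    refine ⟨-((∑ i, |(e i : ℝ)|) * R), ?_⟩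
    rintro r ⟨z, hz, rfl⟩
    exact hdotlow d e z (hTnorm z hz)
  have hlow : vstar - (fun i => (c i : ℝ)) ⬝ᵥ (fun i => (xstar i : ℝ)) ≤
      sInf ((fun z => (fun i => (e i : ℝ)) ⬝ᵥ z) '' Ts) := by
    refine le_csInf hVne ?_
    rintro r ⟨z, hz, rfl⟩
    refine le_of_forall_pos_le_add fun ε hε => ?_
    set a : ℝ := (fun i => (e i : ℝ)) ⬝ᵥ z with ha
    set b : ℝ := (fun i => (e i : ℝ)) ⬝ᵥ (w q0).2 with hb
    set θ : ℝ := min 1 (ε / (|b - a| + 1)) with hθ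
    have hθ0 : 0 < θ := lt_min one_pos (div_pos hε (by positivity))
    have hθ1 : θ ≤ 1 := min_le_left _ _
    have hk := hkey z hz θ hθ0 hθ1
    have h1 : θ * (b - a) ≤ θ * |b - a| :=
      mul_le_mul_of_nonneg_left (le_abs_self _) hθ0.le
    have h2 : θ * |b - a| ≤ (ε / (|b - a| + 1)) * |b - a| :=
      mul_le_mul_of_nonneg_right (min_le_right _ _) (abs_nonneg _)
    have h3 : (ε / (|b - a| + 1)) * |b - a| ≤ ε := by
      rw [div_mul_eq_mul_div, div_le_iff₀ (by positivity)]
      nlinarith [abs_nonneg (b - a)]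
    nlinarith [hk, h1, h2, h3]
  have hup2 : sInf ((fun z => (fun i => (e i : ℝ)) ⬝ᵥ z) '' Ts) ≤
      vstar - (fun i => (c i : ℝ)) ⬝ᵥ (fun i => (xstar i : ℝ)) := by
    refine le_of_forall_pos_le_add fun ε hε => ?_
    obtain ⟨N, hN⟩ := exists_nat_one_div_lt hε
    obtain ⟨q, hqQ, hqN⟩ := hQinf.exists_gt N
    have hzqT := hTmemQ q hqQ.1 hqQ.2
    have h1 : sInf ((fun z => (fun i => (e i : ℝ)) ⬝ᵥ z) '' Ts) ≤
        (fun i => (e i : ℝ)) ⬝ᵥ (w q).2 := csInf_le hVbdd ⟨_, hzqT, rfl⟩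
    have h2 := hwlt q
    rw [hxh q, hqQ.1] at h2
    have h3 : 1 / ((q : ℝ) + 1) ≤ 1 / ((N : ℝ) + 1) := by
      apply one_div_le_one_div_of_le (by positivity)
      have : (N : ℝ) ≤ (q : ℝ) := Nat.cast_le.mpr hqN.le
      linarith
    linarith
  linarith
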